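/- Suppose a_1 > 0 and consider the chain of inequalities: a_1 > a_{n−1}, a_1 > a_{n−2}, and for each i with 0 ≤ i ≤ n−4, a_1 + ∑_{j=i+2}^{n−2} a_j > (n−i−2)·a_{i+1}. Then these inequalities are jointly unsatisfiable by any real sequence (a_i), for n ≥ 4. -/
import Mathlib

theorem stmt_16 (n : ℕ) (hn : 4 ≤ n) :
    ¬ ∃ a : ℕ → ℝ,
      0 < a 1 ∧
      a 1 > a (n - 1) ∧
      a 1 > a (n - 2) ∧
      (∀ i : ℕ, i ≤ n - 4 →
        a 1 + ∑ j ∈ Finset.Icc (i + 2) (n - 2), a j > ((n : ℝ) - i - 2) * a (i + 1)) := by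
  obtain ⟨m, rfl⟩ : ∃ m, n = m + 4 := ⟨n - 4, by omega⟩
  rintro ⟨a, hpos, h1, h2, h3⟩
  have hsub2 : m + 4 - 2 = m + 2 := by omega
  have hsub4 : m + 4 - 4 = m := by omega
  rw [hsub2] at h2 h3
  rw [hsub4] at h3
  -- key claim: a 1 > a k for all 2 ≤ k ≤ m + 2
  have key : ∀ d, ∀ k, 2 ≤ k → k + d = m + 2 → a 1 > a k := by
    intro d
    induction d using Nat.strong_induction_on with
    | _ d ih =>
      intro k hk2 hkd
      rcases Nat.eq_zero_or_pos d with hd0 | hdpos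
      · subst hd0; simpa [show k = m + 2 by omega] using h2
      · have hkm : k ≤ m + 1 := by omega
        have hi : k - 1 ≤ m := by omega
        have hineq := h3 (k - 1) hi
        have hk1 : k - 1 + 2 = k + 1 := by omega
        have hk1' : k - 1 + 1 = k := by omega
        rw [hk1, hk1'] at hineq
        -- each term of the sum is < a 1
        have hlt : ∀ j ∈ Finset.Icc (k + 1) (m + 2), a j < a 1 := by
          intro j hj
          rw [Finset.mem_Icc] at hj
          exact ih (m + 2 - j) (by omega) j (by omega) (by omega)
        have hne : (Finset.Icc (k + 1) (m + 2)).Nonempty := by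
          rw [Finset.nonempty_Icc]; omega
        have hsum : ∑ j ∈ Finset.Icc (k + 1) (m + 2), a j
            < ∑ j ∈ Finset.Icc (k + 1) (m + 2), a 1 :=
          Finset.sum_lt_sum_of_nonempty hne hlt
        rw [Finset.sum_const, Nat.card_Icc, nsmul_eq_mul] at hsum
        have hcard : m + 2 + 1 - (k + 1) = m + 2 - k := by omega
        rw [hcard] at hsum
        have hcast : ((k - 1 : ℕ) : ℝ) = (k : ℝ) - 1 := by
          have : (1:ℕ) ≤ k := by omega
          push_cast [this]; ring
        rw [hcast] at hineq
        have hcast2 : ((m + 2 - k : ℕ) : ℝ) = (m : ℝ) + 2 - k := by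
          have : k ≤ m + 2 := by omega
          push_cast [this]; ring
        rw [hcast2] at hsum
        -- combine: ((m+4) - (k-1) - 2) * a k < a 1 + (m+2-k) * a 1
        have hcoef : ((m + 4 : ℕ) : ℝ) - ((k : ℝ) - 1) - 2 = (m : ℝ) + 3 - k := by
          push_cast; ring
        rw [hcoef] at hineq
        have hfinal : ((m : ℝ) + 3 - k) * a k < ((m : ℝ) + 3 - k) * a 1 := by
          nlinarith [hineq, hsum]
        have hcpos : (0:ℝ) < (m : ℝ) + 3 - k := by
          have : (k : ℝ) ≤ (m : ℝ) + 1 := by exact_mod_cast hkm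
          linarith
        exact lt_of_mul_lt_mul_left hfinal (le_of_lt hcpos)
  -- now use the i = 0 inequality
  have h0 := h3 0 (Nat.zero_le m)
  simp only [Nat.cast_zero, zero_add] at h0
  have hlt : ∀ j ∈ Finset.Icc 2 (m + 2), a j < a 1 := by
    intro j hj
    rw [Finset.mem_Icc] at hj
    exact key (m + 2 - j) j hj.1 (by omega)
  have hne : (Finset.Icc 2 (m + 2)).Nonempty := by
    rw [Finset.nonempty_Icc]; omega
  have hsum : ∑ j ∈ Finset.Icc 2 (m + 2), a j
      < ∑ j ∈ Finset.Icc 2 (m + 2), a 1 :=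
    Finset.sum_lt_sum_of_nonempty hne hlt
  rw [Finset.sum_const, Nat.card_Icc, nsmul_eq_mul] at hsum
  have hcard : m + 2 + 1 - 2 = m + 1 := by omega
  rw [hcard] at hsum
  push_cast at h0 hsum
  nlinarith [h0, hsum, hpos]
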